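/- Let f and g be analytic on the unit disk with f(z) = Σ a_n z^n, g(z) = Σ c_n z^n, and suppose g is subordinate to f (g = f ∘ ω for some analytic ω : 𝔻 → 𝔻 with ω(0) = 0). Then for 0 ≤ r ≤ 1/3, Σ_{n≥0} |c_n| r^n ≤ Σ_{n≥0} |a_n| r^n. -/

import Mathlib

open Complex Metric Set Filter
open scoped Real NNReal Topology
namespace Stmt12



/-- Taylor coefficients at 0 via the Cauchy power series at radius 1/2. -/
noncomputable def tc (h : ℂ → ℂ) : ℕ → ℂ := fun n =>
  (cauchyPowerSeries h 0 ((1/2 : ℝ≥0) : ℝ)).coeff n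

lemma closedBall_subset_unit {R : ℝ≥0} (hR1 : (R:ℝ) < 1) :
    closedBall (0:ℂ) R ⊆ ball (0:ℂ) 1 := fun z hz =>
  mem_ball_zero_iff.mpr (lt_of_le_of_lt (mem_closedBall_zero_iff.mp hz) hR1)

lemma hasFPS_R {h : ℂ → ℂ} (hd : DifferentiableOn ℂ h (ball 0 1)) {R : ℝ≥0}
    (hR : 0 < R) (hR1 : (R:ℝ) < 1) :
    HasFPowerSeriesOnBall h (cauchyPowerSeries h 0 R) 0 R :=
  (hd.mono (closedBall_subset_unit hR1)).hasFPowerSeriesOnBall hR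

lemma cps_eq {h : ℂ → ℂ} (hd : DifferentiableOn ℂ h (ball 0 1)) {R R' : ℝ≥0}
    (hR : 0 < R) (hR1 : (R:ℝ) < 1) (hR' : 0 < R') (hR1' : (R':ℝ) < 1) :
    cauchyPowerSeries h 0 R = cauchyPowerSeries h 0 R' :=
  (hasFPS_R hd hR hR1).hasFPowerSeriesAt.eq_formalMultilinearSeries
    (hasFPS_R hd hR' hR1').hasFPowerSeriesAt

lemma tc_eq_coeff {h : ℂ → ℂ} (hd : DifferentiableOn ℂ h (ball 0 1)) {R : ℝ≥0}
    (hR : 0 < R) (hR1 : (R:ℝ) < 1) (n : ℕ) :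
    tc h n = (cauchyPowerSeries h 0 R).coeff n := by
  rw [tc, cps_eq hd (by norm_num) (by norm_num) hR hR1]

/-- expansion of an analytic function via `tc` on the whole unit ball -/
lemma tc_hasSum {h : ℂ → ℂ} (hd : DifferentiableOn ℂ h (ball 0 1)) {z : ℂ}
    (hz : z ∈ ball (0:ℂ) 1) : HasSum (fun n => tc h n * z ^ n) (h z) := by
  rw [mem_ball_zero_iff] at hz
  set R : ℝ≥0 := ⟨(‖z‖ + 1) / 2, by positivity⟩ with hRdef
  have hzR : ‖z‖ < (R : ℝ) := by
    show ‖z‖ < (‖z‖ + 1) / 2; linarith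
  have hR : 0 < R := by
    rw [← NNReal.coe_lt_coe, NNReal.coe_zero]; show (0:ℝ) < (‖z‖ + 1) / 2; positivity
  have hR1 : (R : ℝ) < 1 := by show (‖z‖ + 1) / 2 < 1; linarith
  have H := (hasFPS_R hd hR hR1).hasSum (y := z) ?_
  · have := H
    simp only [zero_add] at this
    have heq : ∀ n, (cauchyPowerSeries h 0 R n fun _ => z) = tc h n * z ^ n := by
      intro n
      rw [FormalMultilinearSeries.apply_eq_pow_smul_coeff, ← tc_eq_coeff hd hR hR1 n,
        smul_eq_mul, mul_comm]
    simpa only [heq] using this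
  · rw [EMetric.mem_ball, edist_zero_right]
    exact_mod_cast (by exact_mod_cast hzR : ‖z‖₊ < R)


variable {h : ℂ → ℂ}

lemma coeff_ofScalars (a : ℕ → ℂ) (n : ℕ) :
    (FormalMultilinearSeries.ofScalars ℂ a).coeff n = a n := by
  exact FormalMultilinearSeries.coeff_ofScalars

/-- If `h` has a power series expansion with coefficients `a` on the unit ball,
then `ofScalars a` is a power series for `h` on the unit ball. -/
lemma hasFPS_ofScalars {h : ℂ → ℂ} {a : ℕ → ℂ}
    (ha : ∀ z ∈ ball (0:ℂ) 1, HasSum (fun n => a n * z ^ n) (h z)) :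
    HasFPowerSeriesOnBall h (FormalMultilinearSeries.ofScalars ℂ a) 0 1 := by
  constructor
  · -- radius
    refine ENNReal.le_of_forall_nnreal_lt fun x hx => ?_
    have hx1 : (x : ℝ) < 1 := by exact_mod_cast hx
    have hmem : ((x : ℝ) : ℂ) ∈ ball (0:ℂ) 1 := by
      rw [mem_ball_zero_iff]; simpa [_root_.abs_of_nonneg x.coe_nonneg] using hx1
    have hs := (ha _ hmem).summable
    have ht : Tendsto (fun n => ‖a n * ((x:ℝ):ℂ) ^ n‖) atTop (𝓝 0) := by
      simpa using hs.tendsto_atTop_zero.norm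
    obtain ⟨C, hC⟩ := ht.bddAbove_range
    refine (FormalMultilinearSeries.ofScalars ℂ a).le_radius_of_bound C fun n => ?_
    have h1 : ‖a n * ((x:ℝ):ℂ) ^ n‖ = ‖a n‖ * (x:ℝ) ^ n := by
      rw [norm_mul, norm_pow]; norm_num [_root_.abs_of_nonneg x.coe_nonneg]
    have h2 : ‖a n * ((x:ℝ):ℂ) ^ n‖ ≤ C := hC ⟨n, rfl⟩
    rw [h1] at h2
    have h3 : ‖FormalMultilinearSeries.ofScalars ℂ a n‖ ≤ ‖a n‖ := by
      rw [FormalMultilinearSeries.ofScalars_norm]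
    calc ‖FormalMultilinearSeries.ofScalars ℂ a n‖ * (x:ℝ) ^ n
        ≤ ‖a n‖ * (x:ℝ) ^ n := by gcongr
        _ ≤ C := h2
  · exact one_pos
  · intro y hy
    rw [EMetric.mem_ball, edist_zero_right] at hy
    have hy' : y ∈ ball (0:ℂ) 1 := by
      rw [mem_ball_zero_iff]; exact_mod_cast (by simpa [enorm_eq_nnnorm] using hy : ‖y‖₊ < 1)
    have := ha y hy'
    simp only [zero_add]
    have heq : ∀ n, (FormalMultilinearSeries.ofScalars ℂ a n fun _ => y) = a n * y ^ n := by
      intro n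
      rw [FormalMultilinearSeries.apply_eq_pow_smul_coeff, coeff_ofScalars, smul_eq_mul, mul_comm]
    simpa only [heq] using this



lemma diffOn_of_hasSum {a : ℕ → ℂ}
    (ha : ∀ z ∈ ball (0:ℂ) 1, HasSum (fun n => a n * z ^ n) (h z))
    (H : HasFPowerSeriesOnBall h (FormalMultilinearSeries.ofScalars ℂ a) 0 1) :
    DifferentiableOn ℂ h (ball (0:ℂ) 1) := by
  have := H.differentiableOn
  have heq : Metric.eball (0:ℂ) 1 = ball (0:ℂ) 1 := by
    ext z
    rw [Metric.mem_eball, edist_zero_right, mem_ball_zero_iff, enorm_eq_nnnorm]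
    exact_mod_cast Iff.rfl
  rwa [heq] at this

lemma tc_bound_sphere (hd : DifferentiableOn ℂ h (ball 0 1)) {ρ : ℝ≥0} {C : ℝ}
    (hρ : 0 < ρ) (hρ1 : (ρ:ℝ) < 1)
    (hC : ∀ z ∈ sphere (0:ℂ) (ρ:ℝ), ‖h z‖ ≤ C) (n : ℕ) :
    ‖tc h n‖ ≤ C / (ρ:ℝ) ^ n := by
  have hC0 : 0 ≤ C := by
    refine le_trans (norm_nonneg (h ((ρ:ℝ):ℂ))) (hC _ ?_)
    rw [mem_sphere_zero_iff_norm, Complex.norm_real, Real.norm_eq_abs,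
      _root_.abs_of_pos (by exact_mod_cast hρ)]
  have htc : tc h n = (cauchyPowerSeries h 0 (ρ:ℝ)).coeff n := tc_eq_coeff hd hρ hρ1 n
  have h1 : ‖(cauchyPowerSeries h 0 (ρ:ℝ)).coeff n‖ ≤ ‖cauchyPowerSeries h 0 (ρ:ℝ) n‖ := by
    have := (cauchyPowerSeries h 0 (ρ:ℝ) n).le_opNorm (fun _ => (1:ℂ))
    simp only [norm_one, Finset.prod_const_one, mul_one] at this
    exact this
  have h2 := norm_cauchyPowerSeries_le h 0 (ρ:ℝ) n
  -- bound the integral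
  have hcont : ContinuousOn (fun θ : ℝ => ‖h (circleMap 0 (ρ:ℝ) θ)‖) (Icc 0 (2*π)) := by
    apply ContinuousOn.norm
    apply hd.continuousOn.comp (continuous_circleMap 0 (ρ:ℝ)).continuousOn
    intro θ _
    have : circleMap 0 (ρ:ℝ) θ ∈ sphere (0:ℂ) (ρ:ℝ) := circleMap_mem_sphere _ ρ.coe_nonneg _
    rw [mem_sphere_zero_iff_norm] at this
    rw [mem_ball_zero_iff, this]
    exact hρ1
  have hint : ∫ θ : ℝ in (0)..2 * π, ‖h (circleMap 0 (ρ:ℝ) θ)‖ ≤ C * (2*π) := by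
    have hCi : ∫ θ : ℝ in (0)..2 * π, C = C * (2*π) := by
      simp [intervalIntegral.integral_const]; ring
    rw [← hCi]
    apply intervalIntegral.integral_mono_on Real.two_pi_pos.le
    · exact hcont.intervalIntegrable_of_Icc Real.two_pi_pos.le
    · exact intervalIntegrable_const
    · intro θ hθ
      exact hC _ (circleMap_mem_sphere _ ρ.coe_nonneg _)
  have hρpos : (0:ℝ) < (ρ:ℝ) := hρ
  calc ‖tc h n‖ = ‖(cauchyPowerSeries h 0 (ρ:ℝ)).coeff n‖ := by rw [htc]
    _ ≤ ‖cauchyPowerSeries h 0 (ρ:ℝ) n‖ := h1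
    _ ≤ ((2 * π)⁻¹ * ∫ θ : ℝ in (0)..2 * π, ‖h (circleMap 0 (ρ:ℝ) θ)‖) * |(ρ:ℝ)|⁻¹ ^ n := h2
    _ ≤ ((2 * π)⁻¹ * (C * (2*π))) * |(ρ:ℝ)|⁻¹ ^ n := by gcongr
    _ = C / (ρ:ℝ) ^ n := by
        rw [_root_.abs_of_pos hρpos]
        field_simp
        rw [one_div, inv_pow, mul_assoc, inv_mul_cancel₀ (by positivity), mul_one]

lemma tc_bound (hd : DifferentiableOn ℂ h (ball 0 1)) {C : ℝ}
    (hC : ∀ z ∈ ball (0:ℂ) 1, ‖h z‖ ≤ C) (n : ℕ) : ‖tc h n‖ ≤ C := by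
  have key : ∀ ρ : ℝ, ρ ∈ Ioo (0:ℝ) 1 → ‖tc h n‖ ≤ C / ρ ^ n := by
    intro ρ hρ
    have hsub : sphere (0:ℂ) ρ ⊆ ball (0:ℂ) 1 := by
      intro z hz
      rw [mem_sphere_zero_iff_norm] at hz
      rw [mem_ball_zero_iff, hz]; exact hρ.2
    have := tc_bound_sphere hd (ρ := ⟨ρ, hρ.1.le⟩) (by exact_mod_cast hρ.1)
      (by exact_mod_cast hρ.2) (fun z hz => hC z (hsub (by exact_mod_cast hz))) n
    exact_mod_cast this
  have hT : Tendsto (fun ρ : ℝ => C / ρ ^ n) (𝓝[<] (1:ℝ)) (𝓝 (C / 1 ^ n)) := by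
    apply Filter.Tendsto.mono_left _ nhdsWithin_le_nhds
    exact (continuousAt_const.div (continuousAt_pow _ _) (by norm_num)).tendsto
  rw [one_pow, div_one] at hT
  refine ge_of_tendsto hT ?_
  filter_upwards [Ioo_mem_nhdsLT_of_mem (by constructor <;> norm_num : (1:ℝ) ∈ Ioc (0:ℝ) 1)]
    with ρ hρ using key ρ hρ

lemma tc_zero (hd : DifferentiableOn ℂ h (ball 0 1)) : tc h 0 = h 0 := by
  have h1 := tc_hasSum hd (mem_ball_self one_pos)
  have h2 : HasSum (fun n => tc h n * (0:ℂ) ^ n) (tc h 0 * (0:ℂ) ^ 0) :=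
    hasSum_single 0 (by intro b hb; simp [zero_pow hb])
  have := h1.unique h2
  simpa using this.symm

lemma tc_deriv (hd : DifferentiableOn ℂ h (ball 0 1)) : deriv h 0 = tc h 1 := by
  have := (hasFPS_R hd (R := 1/2) (by norm_num) (by norm_num)).hasFPowerSeriesAt.deriv
  rw [this]; rfl




lemma tc_eq {a : ℕ → ℂ}
    (ha : ∀ z ∈ ball (0:ℂ) 1, HasSum (fun n => a n * z ^ n) (h z)) (n : ℕ) :
    tc h n = a n := by
  have H := hasFPS_ofScalars ha
  have hd := diffOn_of_hasSum ha H
  have h1 := (hasFPS_R hd (R := 1/2) (by norm_num) (by norm_num)).hasFPowerSeriesAt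
  have h2 := H.hasFPowerSeriesAt
  have h3 := h1.eq_formalMultilinearSeries h2
  rw [tc, h3, coeff_ofScalars]

lemma normSq_key (u v : ℂ) :
    Complex.normSq (1 - (starRingEnd ℂ) u * v) - Complex.normSq (v - u)
      = (1 - Complex.normSq u) * (1 - Complex.normSq v) := by
  simp only [Complex.normSq_apply, Complex.mul_re, Complex.mul_im, Complex.sub_re,
    Complex.sub_im, Complex.one_re, Complex.one_im, Complex.conj_re, Complex.conj_im]
  ring

lemma schwarz_pick {ψ : ℂ → ℂ} (hd : DifferentiableOn ℂ ψ (ball 0 1))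
    (hb : ∀ z ∈ ball (0:ℂ) 1, ‖ψ z‖ ≤ 1) : ‖deriv ψ 0‖ ≤ 1 - ‖ψ 0‖^2 := by
  by_cases hex : ∃ z ∈ ball (0:ℂ) 1, 1 ≤ ‖ψ z‖
  · obtain ⟨z, hz, hz1⟩ := hex
    have hmax : IsMaxOn (norm ∘ ψ) (ball (0:ℂ) 1) z :=
      isMaxOn_iff.mpr fun w hw => le_trans (hb w hw) hz1
    have heq := Complex.eqOn_of_isPreconnected_of_isMaxOn_norm
      (convex_ball (0:ℂ) 1).isPreconnected isOpen_ball hd hz hmax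
    have hψ0 : ψ 0 = ψ z := heq (mem_ball_self one_pos)
    have hderiv : deriv ψ 0 = 0 := by
      have hev : ψ =ᶠ[𝓝 0] (fun _ => ψ z) := by
        filter_upwards [isOpen_ball.mem_nhds (mem_ball_self one_pos)] with x hx
        exact heq hx
      rw [hev.deriv_eq]; exact deriv_const _ _
    have hno : ‖ψ z‖ = 1 := le_antisymm (hb z hz) hz1
    rw [hderiv, norm_zero, hψ0, hno]; norm_num
  · push_neg at hex
    set a := ψ 0 with ha
    have ha1 : ‖a‖ < 1 := hex 0 (mem_ball_self one_pos)
    have hnsa : Complex.normSq a < 1 := by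
      have := Complex.sq_norm a
      nlinarith [norm_nonneg a]
    have hden : ∀ z ∈ ball (0:ℂ) 1, 1 - (starRingEnd ℂ) a * ψ z ≠ 0 := by
      intro z hz
      have h1 : Complex.normSq (ψ z) < 1 := by
        have := Complex.sq_norm (ψ z)
        nlinarith [norm_nonneg (ψ z), hex z hz]
      have h2 := normSq_key a (ψ z)
      have h3 : 0 < Complex.normSq (1 - (starRingEnd ℂ) a * ψ z) := by
        nlinarith [Complex.normSq_nonneg (ψ z - a)]
      exact fun hcon => by simp [hcon] at h3
    set χ : ℂ → ℂ := fun z => (ψ z - a) / (1 - (starRingEnd ℂ) a * ψ z) with hχ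
    have hχd : DifferentiableOn ℂ χ (ball 0 1) := by
      apply DifferentiableOn.div
      · exact hd.sub_const a
      · exact (differentiableOn_const _).sub (hd.const_smul ((starRingEnd ℂ) a))
      · exact hden
    have hχ0 : χ 0 = 0 := by simp [hχ, ← ha]
    have hmaps : MapsTo χ (ball (0:ℂ) 1) (ball (χ 0) 1) := by
      rw [hχ0]
      intro z hz
      rw [mem_ball_zero_iff]
      have h1 : Complex.normSq (ψ z) < 1 := by
        have := Complex.sq_norm (ψ z)
        nlinarith [norm_nonneg (ψ z), hex z hz]
      have h2 := normSq_key a (ψ z)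
      have hlt : Complex.normSq (ψ z - a) < Complex.normSq (1 - (starRingEnd ℂ) a * ψ z) := by
        nlinarith
      have hnorm : ‖ψ z - a‖ < ‖1 - (starRingEnd ℂ) a * ψ z‖ := by
        rw [Complex.norm_def, Complex.norm_def]
        exact Real.sqrt_lt_sqrt (Complex.normSq_nonneg _) hlt
      rw [hχ, norm_div]
      rw [div_lt_one (lt_of_le_of_lt (norm_nonneg _) hnorm)]
      exact hnorm
    have hSch : ‖deriv χ 0‖ ≤ 1 :=
      (by simpa using Complex.norm_deriv_le_div_of_mapsTo_ball hχd (hmaps.mono_right ball_subset_closedBall) one_pos)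
    -- chain rule computation
    have hψat : DifferentiableAt ℂ ψ 0 :=
      hd.differentiableAt (isOpen_ball.mem_nhds (mem_ball_self one_pos))
    have hψder : HasDerivAt ψ (deriv ψ 0) 0 := hψat.hasDerivAt
    have hden0 : 1 - (starRingEnd ℂ) a * ψ 0 ≠ 0 := hden 0 (mem_ball_self one_pos)
    have hden0' : 1 - (starRingEnd ℂ) a * a ≠ 0 := hden0
    have hχder : HasDerivAt χ
        ((deriv ψ 0 * (1 - (starRingEnd ℂ) a * ψ 0)
          - (ψ 0 - a) * (0 - (starRingEnd ℂ) a * deriv ψ 0))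
          / (1 - (starRingEnd ℂ) a * ψ 0) ^ 2) 0 := by
      exact (hψder.sub_const a).div
        ((hasDerivAt_const 0 (1:ℂ)).sub ((hψder.const_mul ((starRingEnd ℂ) a)))) hden0
    have hχderiv : deriv χ 0 = deriv ψ 0 / (1 - (starRingEnd ℂ) a * a) := by
      rw [hχder.deriv, ← ha]
      rw [sub_self]
      field_simp
      ring
    have hval : (starRingEnd ℂ) a * a = (Complex.normSq a : ℂ) := by
      rw [mul_comm, Complex.mul_conj]
    have hnorm1 : ‖(1:ℂ) - (starRingEnd ℂ) a * a‖ = 1 - Complex.normSq a := by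
      rw [hval]
      rw [show (1:ℂ) - (Complex.normSq a : ℂ) = ((1 - Complex.normSq a : ℝ) : ℂ) by push_cast; ring]
      rw [Complex.norm_real, Real.norm_eq_abs, _root_.abs_of_pos (by linarith)]
    have : deriv ψ 0 = deriv χ 0 * (1 - (starRingEnd ℂ) a * a) := by
      rw [hχderiv]
      field_simp
    rw [this, norm_mul, hnorm1]
    have hsq : Complex.normSq a = ‖a‖^2 := by
      rw [Complex.sq_norm]
    rw [hsq]
    nlinarith [norm_nonneg (deriv χ 0), norm_nonneg a]


lemma wiener {ψ : ℂ → ℂ} (hd : DifferentiableOn ℂ ψ (ball 0 1))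
    (hb : ∀ z ∈ ball (0:ℂ) 1, ‖ψ z‖ ≤ 1) {m : ℕ} (hm : 0 < m) :
    ‖tc ψ m‖ ≤ 1 - ‖ψ 0‖^2 := by
  set ζ : ℂ := Complex.exp (2 * ↑π * I / m) with hζdef
  have hζ : IsPrimitiveRoot ζ m := Complex.isPrimitiveRoot_exp m hm.ne'
  have hζabs : ‖ζ‖ = 1 := by
    rw [hζdef, show (2 * ↑π * I / (m:ℂ)) = ((2 * π / m : ℝ) : ℂ) * I by push_cast; ring]
    rw [Complex.norm_exp_ofReal_mul_I]
  have hmC : ((m:ℂ)) ≠ 0 := Nat.cast_ne_zero.mpr hm.ne'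
  have hroot : ∀ n : ℕ, (∑ j ∈ Finset.range m, (ζ^n)^j) = if m ∣ n then (m:ℂ) else 0 := by
    intro n
    by_cases hdvd : m ∣ n
    · rw [if_pos hdvd]
      have h1 : ζ^n = 1 := (hζ.pow_eq_one_iff_dvd n).mpr hdvd
      simp [h1]
    · rw [if_neg hdvd]
      have h1 : ζ^n ≠ 1 := fun hcon => hdvd ((hζ.pow_eq_one_iff_dvd n).mp hcon)
      rw [geom_sum_eq h1]
      have h2 : (ζ^n)^m = 1 := by
        rw [← pow_mul, mul_comm, pow_mul, hζ.pow_eq_one, one_pow]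
      rw [h2, sub_self, zero_div]
  -- averaged partial function
  set S : ℂ → ℂ := fun z => ∑ j ∈ Finset.range m, (m:ℂ)⁻¹ * ψ (ζ^j * z) with hSdef
  have hSb : ∀ z ∈ ball (0:ℂ) 1, ‖S z‖ ≤ 1 := by
    intro z hz
    calc ‖S z‖ ≤ ∑ j ∈ Finset.range m, ‖(m:ℂ)⁻¹ * ψ (ζ^j * z)‖ := norm_sum_le _ _
      _ ≤ ∑ j ∈ Finset.range m, (m:ℝ)⁻¹ := by
          apply Finset.sum_le_sum
          intro j _
          rw [norm_mul]
          have hmem : ζ^j * z ∈ ball (0:ℂ) 1 := by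
            rw [mem_ball_zero_iff] at hz ⊢
            rw [norm_mul, norm_pow, hζabs, one_pow, one_mul]; exact hz
          have h2 : ‖((m:ℂ))⁻¹‖ = (m:ℝ)⁻¹ := by
            rw [norm_inv]; norm_num
          rw [h2]
          calc (m:ℝ)⁻¹ * ‖ψ (ζ^j * z)‖ ≤ (m:ℝ)⁻¹ * 1 := by
                gcongr; exact hb _ hmem
            _ = (m:ℝ)⁻¹ := mul_one _
      _ = 1 := by
          rw [Finset.sum_const, Finset.card_range, nsmul_eq_mul]
          field_simp
  have Havg : ∀ z ∈ ball (0:ℂ) 1,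
      HasSum (fun n => if m ∣ n then tc ψ n * z^n else 0) (S z) := by
    intro z hz
    have hj : ∀ j ∈ Finset.range m,
        HasSum (fun n => (m:ℂ)⁻¹ * (tc ψ n * (ζ^j * z)^n)) ((m:ℂ)⁻¹ * ψ (ζ^j * z)) := by
      intro j _
      have hmem : ζ^j * z ∈ ball (0:ℂ) 1 := by
        rw [mem_ball_zero_iff] at hz ⊢
        rw [norm_mul, norm_pow, hζabs, one_pow, one_mul]; exact hz
      exact (tc_hasSum hd hmem).mul_left _
    have H := hasSum_sum hj
    have heq : (fun n => ∑ j ∈ Finset.range m, (m:ℂ)⁻¹ * (tc ψ n * (ζ^j * z)^n))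
        = fun n => if m ∣ n then tc ψ n * z^n else 0 := by
      funext n
      have h1 : ∀ j, (ζ^j * z)^n = (ζ^n)^j * z^n := by
        intro j; rw [mul_pow, ← pow_mul, mul_comm j n, pow_mul]
      simp only [h1]
      have h2 : ∀ x : ℕ, (m:ℂ)⁻¹ * (tc ψ n * ((ζ ^ n) ^ x * z ^ n))
          = (ζ ^ n) ^ x * ((m:ℂ)⁻¹ * (tc ψ n * z ^ n)) := fun x => by ring
      simp only [h2]
      rw [← Finset.sum_mul, hroot n]
      by_cases hdvd : m ∣ n
      · rw [if_pos hdvd, if_pos hdvd]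
        field_simp
      · rw [if_neg hdvd, if_neg hdvd]
        simp
    rwa [heq] at H
  -- reindex to multiples of m
  have HG : ∀ z ∈ ball (0:ℂ) 1,
      HasSum (fun t => tc ψ (m*t) * (z^m)^t) (S z) := by
    intro z hz
    have hinj : Function.Injective (fun t : ℕ => m * t) := fun x y hxy => by
      exact Nat.eq_of_mul_eq_mul_left hm hxy
    have hsupp : ∀ n ∉ Set.range (fun t : ℕ => m * t),
        (if m ∣ n then tc ψ n * z^n else 0) = 0 := by
      intro n hn
      rw [if_neg]
      intro hdvd
      obtain ⟨t, ht⟩ := hdvd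
      exact hn ⟨t, ht.symm⟩
    have := (Function.Injective.hasSum_iff hinj hsupp).mpr (Havg z hz)
    have heq : ((fun n => if m ∣ n then tc ψ n * z^n else 0) ∘ (fun t : ℕ => m * t))
        = fun t => tc ψ (m*t) * (z^m)^t := by
      funext t
      simp only [Function.comp_apply]
      rw [if_pos (dvd_mul_right m t), ← pow_mul]
    rwa [heq] at this
  -- the function G
  set G : ℂ → ℂ := fun w => ∑' t, tc ψ (m*t) * w^t with hGdef
  have hGkey : ∀ w ∈ ball (0:ℂ) 1, HasSum (fun t => tc ψ (m*t) * w^t) (G w) ∧ ‖G w‖ ≤ 1 := by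
    intro w hw
    obtain ⟨z, hzball, hzm⟩ : ∃ z ∈ ball (0:ℂ) 1, z^m = w := by
      by_cases hw0 : w = 0
      · exact ⟨0, mem_ball_self one_pos, by rw [zero_pow hm.ne', hw0]⟩
      · refine ⟨Complex.exp (Complex.log w / m), ?_, ?_⟩
        · rw [mem_ball_zero_iff, Complex.norm_exp]
          have hre : (Complex.log w / m).re = Real.log ‖w‖ / m := by
            rw [show (Complex.log w / (m:ℂ)) = Complex.log w * ((m:ℂ))⁻¹ by ring]
            rw [Complex.mul_re]
            simp [Complex.log_re]
            rw [div_eq_mul_inv]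
          rw [hre]
          have hlog : Real.log ‖w‖ < 0 := by
            apply Real.log_neg
            · exact norm_pos_iff.mpr hw0
            · rw [mem_ball_zero_iff] at hw; exact hw
          have : Real.log ‖w‖ / m < 0 := by
            apply div_neg_of_neg_of_pos hlog
            exact_mod_cast hm
          calc Real.exp _ < Real.exp 0 := Real.exp_lt_exp.mpr this
            _ = 1 := Real.exp_zero
        · rw [← Complex.exp_nat_mul, mul_div_cancel₀ _ hmC, Complex.exp_log hw0]
    have h1 := HG z hzball
    rw [hzm] at h1
    have hGw : G w = S z := h1.tsum_eq
    constructor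
    · rw [hGw]; exact h1
    · rw [hGw]; exact hSb z hzball
  have hGsum : ∀ w ∈ ball (0:ℂ) 1, HasSum (fun t => tc ψ (m*t) * w^t) (G w) :=
    fun w hw => (hGkey w hw).1
  have hGb : ∀ w ∈ ball (0:ℂ) 1, ‖G w‖ ≤ 1 := fun w hw => (hGkey w hw).2
  have hGd : DifferentiableOn ℂ G (ball (0:ℂ) 1) :=
    diffOn_of_hasSum hGsum (hasFPS_ofScalars hGsum)
  have htcG : ∀ t, tc G t = tc ψ (m*t) := tc_eq hGsum
  have hG0 : G 0 = ψ 0 := by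
    rw [← tc_zero hGd, htcG 0, mul_zero, tc_zero hd]
  have hder : deriv G 0 = tc ψ m := by
    rw [tc_deriv hGd, htcG 1, mul_one]
  have := schwarz_pick hGd hGb
  rw [hder, hG0] at this
  exact this


set_option maxHeartbeats 1000000 in
lemma bohr {ψ : ℂ → ℂ} (hd : DifferentiableOn ℂ ψ (ball 0 1))
    (hb : ∀ z ∈ ball (0:ℂ) 1, ‖ψ z‖ ≤ 1) {r : ℝ} (hr0 : 0 ≤ r) (hr3 : r ≤ 1/3) :
    Summable (fun n => ‖tc ψ n‖ * r^n) ∧ (∑' n, ‖tc ψ n‖ * r ^ n) ≤ 1 := by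
  have hb0 : ‖ψ 0‖ ≤ 1 := hb 0 (mem_ball_self one_pos)
  have hr1 : r < 1 := by linarith
  have hbd : ∀ n, ‖tc ψ n‖ ≤ 1 := tc_bound hd hb
  have hsum : Summable (fun n => ‖tc ψ n‖ * r^n) := by
    apply Summable.of_nonneg_of_le (fun n => by positivity) (fun n => ?_)
      (summable_geometric_of_lt_one hr0 hr1)
    calc ‖tc ψ n‖ * r^n ≤ 1 * r^n := by gcongr; exact hbd n
      _ = r^n := one_mul _
  refine ⟨hsum, ?_⟩
  set B := ‖ψ 0‖ with hB
  have hB0 : 0 ≤ B := norm_nonneg _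
  have hBsq : 0 ≤ 1 - B^2 := by nlinarith
  have hsplit : (∑' n, ‖tc ψ n‖ * r ^ n)
      = ‖tc ψ 0‖ * r^0 + ∑' n, ‖tc ψ (n+1)‖ * r^(n+1) := Summable.tsum_eq_zero_add hsum
  have hsum1 : Summable (fun n => ‖tc ψ (n+1)‖ * r^(n+1)) :=
    (summable_nat_add_iff 1).mpr hsum
  have hsum2 : Summable (fun n : ℕ => (1 - B^2) * r^(n+1)) := by
    apply Summable.mul_left
    exact (summable_nat_add_iff 1).mpr (summable_geometric_of_lt_one hr0 hr1)
  have htail : (∑' n, ‖tc ψ (n+1)‖ * r^(n+1)) ≤ ∑' n : ℕ, (1 - B^2) * r^(n+1) := by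
    apply Summable.tsum_le_tsum _ hsum1 hsum2
    intro n
    have hw := wiener hd hb (Nat.succ_pos n)
    have : (0:ℝ) ≤ r^(n+1) := by positivity
    nlinarith
  have hgeom : (∑' n : ℕ, (1 - B^2) * r^(n+1)) = (1 - B^2) * (r * (1-r)⁻¹) := by
    have h1 : ∀ n : ℕ, (1 - B^2) * r^(n+1) = ((1 - B^2) * r) * r^n := fun n => by ring
    simp only [h1]
    rw [tsum_mul_left, tsum_geometric_of_lt_one hr0 hr1]
    ring
  have hhalf : r * (1-r)⁻¹ ≤ 1/2 := by
    rw [← div_eq_mul_inv, div_le_iff₀ (by linarith)]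
    linarith
  have h0 : ‖tc ψ 0‖ * r^0 = B := by rw [tc_zero hd, pow_zero, mul_one]
  rw [hsplit, h0]
  have : (∑' n, ‖tc ψ (n+1)‖ * r^(n+1)) ≤ (1 - B^2) * (1/2) := by
    calc _ ≤ ∑' n : ℕ, (1 - B^2) * r^(n+1) := htail
      _ = (1 - B^2) * (r * (1-r)⁻¹) := hgeom
      _ ≤ (1 - B^2) * (1/2) := by gcongr
  nlinarith [sq_nonneg (1 - B)]


set_option maxHeartbeats 2000000 in
theorem main (f g ω : ℂ → ℂ) (a c : ℕ → ℂ)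
    (hf : ∀ z ∈ Metric.ball (0:ℂ) 1, HasSum (fun n : ℕ => a n * z ^ n) (f z))
    (hg : ∀ z ∈ Metric.ball (0:ℂ) 1, HasSum (fun n : ℕ => c n * z ^ n) (g z))
    (hω : DifferentiableOn ℂ ω (Metric.ball 0 1))
    (hω0 : ω 0 = 0)
    (hωmap : Set.MapsTo ω (Metric.ball (0:ℂ) 1) (Metric.ball (0:ℂ) 1))
    (hsub : ∀ z ∈ Metric.ball (0:ℂ) 1, g z = f (ω z))
    {r : ℝ} (hr0 : 0 ≤ r) (hr3 : r ≤ 1/3) :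
    (∑' n : ℕ, ‖c n‖ * r ^ n) ≤ ∑' n : ℕ, ‖a n‖ * r ^ n := by
  classical
  have hr1 : r < 1 := by linarith
  -- Schwarz lemma setup
  set u : ℂ → ℂ := dslope ω 0 with hu
  have hud : DifferentiableOn ℂ u (ball (0:ℂ) 1) :=
    (differentiableOn_dslope (isOpen_ball.mem_nhds (mem_ball_self one_pos))).mpr hω
  have humaps : MapsTo ω (ball (0:ℂ) 1) (ball (ω 0) 1) := by rw [hω0]; exact hωmap
  have hub : ∀ z ∈ ball (0:ℂ) 1, ‖u z‖ ≤ 1 := fun z hz => by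
    simpa using Complex.norm_dslope_le_div_of_mapsTo_ball hω (humaps.mono_right ball_subset_closedBall) hz
  have hωz : ∀ z : ℂ, ω z = z * u z := by
    intro z
    have h1 := sub_smul_dslope ω 0 z
    rw [hω0, sub_zero, sub_zero, smul_eq_mul] at h1
    exact h1.symm
  -- coefficients of u^k
  set b : ℕ → ℕ → ℂ := fun k m => tc (fun z => (u z)^k) m with hb
  have hφd : ∀ k : ℕ, DifferentiableOn ℂ (fun z => (u z)^k) (ball (0:ℂ) 1) :=
    fun k => hud.pow k
  have hφb : ∀ k : ℕ, ∀ z ∈ ball (0:ℂ) 1, ‖(u z)^k‖ ≤ 1 := by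
    intro k z hz
    rw [norm_pow]
    exact pow_le_one₀ (norm_nonneg _) (hub z hz)
  set W : ℕ → ℕ → ℂ := fun k n => if n < k then 0 else b k (n - k) with hW
  have hWsum : ∀ (k : ℕ), ∀ z ∈ ball (0:ℂ) 1,
      HasSum (fun n => W k n * z^n) ((ω z)^k) := by
    intro k z hz
    have h1 : HasSum (fun m => b k m * z^m) ((u z)^k) := tc_hasSum (hφd k) hz
    have h2 := h1.mul_left (z^k)
    have h3 : (ω z)^k = z^k * (u z)^k := by rw [hωz z, mul_pow]
    have hinj : Function.Injective (fun m : ℕ => m + k) := add_left_injective k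
    have hsupp : ∀ n ∉ Set.range (fun m : ℕ => m + k), W k n * z^n = 0 := by
      intro n hn
      have hnk : n < k := by
        by_contra hcon
        exact hn ⟨n - k, by simpa using Nat.sub_add_cancel (Nat.le_of_not_lt hcon)⟩
      rw [hW]; simp only [if_pos hnk, zero_mul]
    have heq : ((fun n => W k n * z^n) ∘ (fun m : ℕ => m + k))
        = fun m => z^k * (b k m * z^m) := by
      funext m
      simp only [Function.comp_apply, hW]
      rw [if_neg (by omega), Nat.add_sub_cancel, pow_add]
      ring
    rw [h3]
    refine (Function.Injective.hasSum_iff hinj hsupp).mp ?_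
    rw [show ((fun n => W k n * z^n) ∘ (fun m : ℕ => m + k)) = _ from heq]
    exact h2
  -- summability of |a_k| 3^{-k}
  have hA : Summable (fun k => ‖a k‖ * (1/3:ℝ)^k) := by
    have hhalf : ((1/2:ℝ):ℂ) ∈ ball (0:ℂ) 1 := by
      rw [mem_ball_zero_iff, Complex.norm_real, Real.norm_eq_abs]; rw [_root_.abs_of_pos] <;> norm_num
    have hs := (hf _ hhalf).summable
    have ht : Tendsto (fun k => ‖a k * ((1/2:ℝ):ℂ)^k‖) atTop (𝓝 0) := by
      simpa using hs.tendsto_atTop_zero.norm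
    obtain ⟨M, hM⟩ := ht.bddAbove_range
    apply Summable.of_nonneg_of_le (fun k => by positivity) (fun k => ?_)
      ((summable_geometric_of_lt_one (by norm_num) (by norm_num : (2/3:ℝ) < 1)).mul_left M)
    have h2 : ‖a k * ((1/2:ℝ):ℂ)^k‖ ≤ M := hM ⟨k, rfl⟩
    have h3 : ‖a k * ((1/2:ℝ):ℂ)^k‖ = ‖a k‖ * (1/2:ℝ)^k := by
      rw [norm_mul, norm_pow, Complex.norm_real, Real.norm_eq_abs]
      rw [_root_.abs_of_pos] <;> norm_num
    rw [h3] at h2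
    calc ‖a k‖ * (1/3:ℝ)^k = (‖a k‖ * (1/2:ℝ)^k) * (2/3:ℝ)^k := by
          rw [mul_assoc, ← mul_pow]; norm_num
      _ ≤ M * (2/3:ℝ)^k := by gcongr
  have hAr : Summable (fun k => ‖a k‖ * r^k) := by
    apply Summable.of_nonneg_of_le (fun k => by positivity) (fun k => ?_) hA
    have : r^k ≤ (1/3:ℝ)^k := pow_le_pow_left₀ hr0 hr3 k
    nlinarith [norm_nonneg (a k), pow_nonneg hr0 k]
  -- coefficient identity: c n is a finite sum
  set Aq : ℕ → ℝ := fun k => ‖a k‖ * (1/3:ℝ)^k with hAqdef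
  set E : ℕ → ℝ := fun N => ∑' (x : ↑((Finset.range N : Finset ℕ) : Set ℕ)ᶜ), Aq x with hE
  have hE0 : Tendsto E atTop (𝓝 0) :=
    (tendsto_tsum_compl_atTop_zero Aq).comp tendsto_finset_range
  have hcast : ((1/3 : ℝ≥0) : ℝ) = (1/3 : ℝ) := by norm_num
  have hcn : ∀ n : ℕ, c n = ∑ k ∈ Finset.range (n+1), a k * W k n := by
    intro n
    have htail : ∀ N : ℕ,
        ‖c n - ∑ k ∈ Finset.range N, a k * W k n‖ ≤ E N / (1/3:ℝ)^n := by
      intro N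
      set T : ℂ → ℂ := fun z => g z - ∑ k ∈ Finset.range N, a k * (ω z)^k with hT
      have hTsum : ∀ z ∈ ball (0:ℂ) 1,
          HasSum (fun j => (c j - ∑ k ∈ Finset.range N, a k * W k j) * z^j) (T z) := by
        intro z hz
        have h1 := (hg z hz).sub (hasSum_sum (fun k (_ : k ∈ Finset.range N) =>
          (hWsum k z hz).mul_left (a k)))
        have heq : (fun j => c j * z^j - ∑ k ∈ Finset.range N, a k * (W k j * z^j))
            = fun j => (c j - ∑ k ∈ Finset.range N, a k * W k j) * z^j := by
          funext j
          rw [sub_mul, Finset.sum_mul]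
          congr 1
          apply Finset.sum_congr rfl
          intros; ring
        rw [hT]
        rw [← heq]
        exact h1
      have htc := tc_eq hTsum n
      rw [← htc]
      have hbd := tc_bound_sphere (diffOn_of_hasSum hTsum (hasFPS_ofScalars hTsum))
        (ρ := (1/3 : ℝ≥0)) (by norm_num) (by rw [hcast]; norm_num) (C := E N) ?_ n
      · rwa [hcast] at hbd
      · intro z hzs
        rw [hcast] at hzs
        have hzn : ‖z‖ = (1/3:ℝ) := mem_sphere_zero_iff_norm.mp hzs
        have hzball : z ∈ ball (0:ℂ) 1 := by rw [mem_ball_zero_iff, hzn]; norm_num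
        have hωb : ‖ω z‖ ≤ (1/3:ℝ) := by
          rw [hωz z, norm_mul, hzn]
          calc (1/3:ℝ) * ‖u z‖ ≤ (1/3:ℝ) * 1 := by gcongr; exact hub z hzball
            _ = 1/3 := mul_one _
        have htot : HasSum (fun k => a k * (ω z)^k) (g z) := by
          rw [hsub z hzball]; exact hf (ω z) (hωmap hzball)
        have hkey := Summable.sum_add_tsum_compl (s := Finset.range N) htot.summable
        have hTz : T z = ∑' (x : ↑((Finset.range N : Finset ℕ) : Set ℕ)ᶜ),
            a x * (ω z)^(x:ℕ) := by
          rw [hT]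
          simp only
          rw [← htot.tsum_eq, ← hkey]
          ring
        rw [hTz]
        have hnsum : Summable (fun x : ↑((Finset.range N : Finset ℕ) : Set ℕ)ᶜ =>
            ‖a x * (ω z)^(x:ℕ)‖) := by
          apply Summable.of_nonneg_of_le (fun _ => norm_nonneg _) (fun x => ?_)
            (hA.subtype _)
          rw [norm_mul, norm_pow]
          exact mul_le_mul_of_nonneg_left (pow_le_pow_left₀ (norm_nonneg _) hωb _)
            (norm_nonneg _)
        calc ‖∑' (x : ↑((Finset.range N : Finset ℕ) : Set ℕ)ᶜ), a x * (ω z)^(x:ℕ)‖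
            ≤ ∑' (x : ↑((Finset.range N : Finset ℕ) : Set ℕ)ᶜ), ‖a x * (ω z)^(x:ℕ)‖ :=
              norm_tsum_le_tsum_norm hnsum
          _ ≤ E N := by
              rw [hE]
              apply Summable.tsum_le_tsum _ hnsum (hA.subtype _)
              intro x
              rw [norm_mul, norm_pow, hAqdef]
              exact mul_le_mul_of_nonneg_left (pow_le_pow_left₀ (norm_nonneg _) hωb _)
                (norm_nonneg _)
    have hstable : ∀ N, n+1 ≤ N →
        ∑ k ∈ Finset.range N, a k * W k n = ∑ k ∈ Finset.range (n+1), a k * W k n := by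
      intro N hN
      symm
      apply Finset.sum_subset (Finset.range_subset_range.mpr hN)
      intro k hk hnk
      have hkn : n < k := by
        simp only [Finset.mem_range] at hk hnk
        omega
      rw [hW]
      simp only [if_pos hkn, mul_zero]
    have hv : ‖c n - ∑ k ∈ Finset.range (n+1), a k * W k n‖ ≤ 0 := by
      have hTend : Tendsto (fun N => E N / (1/3:ℝ)^n) atTop (𝓝 0) := by
        have := hE0.div_const ((1/3:ℝ)^n)
        simpa using this
      refine ge_of_tendsto hTend ?_
      filter_upwards [eventually_ge_atTop (n+1)] with N hN
      rw [← hstable N hN]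
      exact htail N
    have := norm_le_zero_iff.mp hv
    exact sub_eq_zero.mp this
  -- Bohr bound for each k
  have hbohr : ∀ k, Summable (fun m => ‖b k m‖ * r^m) ∧ (∑' m, ‖b k m‖ * r^m) ≤ 1 :=
    fun k => bohr (hφd k) (hφb k) hr0 hr3
  have hWb : ∀ k n, ‖W k n‖ ≤ 1 := by
    intro k n
    rw [hW]
    by_cases hnk : n < k
    · simp [if_pos hnk]
    · simp only [if_neg hnk]
      exact tc_bound (hφd k) (hφb k) _
  -- rows of the double sum
  set F2 : ℕ → ℕ → ℝ := fun k n => ‖a k‖ * ‖W k n‖ * r^n with hF2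
  have hF2nn : ∀ p : ℕ × ℕ, 0 ≤ F2 p.1 p.2 := fun p => by
    rw [hF2]; positivity
  have hrow : ∀ k, HasSum (fun n => ‖W k n‖ * r^n) (r^k * ∑' m, ‖b k m‖ * r^m) := by
    intro k
    have h1 := (hbohr k).1.hasSum.mul_left (r^k)
    have hinj : Function.Injective (fun m : ℕ => m + k) := add_left_injective k
    have hsupp : ∀ n ∉ Set.range (fun m : ℕ => m + k), ‖W k n‖ * r^n = 0 := by
      intro n hn
      have hnk : n < k := by by_contra hcon; exact hn ⟨n - k, by simpa using Nat.sub_add_cancel (Nat.le_of_not_lt hcon)⟩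
      rw [hW]; simp [if_pos hnk]
    refine (Function.Injective.hasSum_iff hinj hsupp).mp ?_
    have heq : ((fun n => ‖W k n‖ * r^n) ∘ (fun m : ℕ => m + k))
        = fun m => r^k * (‖b k m‖ * r^m) := by
      funext m
      simp only [Function.comp_apply, hW, if_neg (by omega : ¬ m + k < k), Nat.add_sub_cancel]
      rw [pow_add]; ring
    rw [heq]; exact h1
  have hrow_le : ∀ k, (∑' n, ‖W k n‖ * r^n) ≤ r^k := by
    intro k
    rw [(hrow k).tsum_eq]
    calc r^k * ∑' m, ‖b k m‖ * r^m ≤ r^k * 1 :=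
          mul_le_mul_of_nonneg_left (hbohr k).2 (by positivity)
      _ = r^k := mul_one _
  -- summability of the double sum
  have hBndrow : ∀ k, HasSum (fun n => if n < k then (0:ℝ) else ‖a k‖ * r^n)
      (‖a k‖ * r^k * (1-r)⁻¹) := by
    intro k
    have h1 := (hasSum_geometric_of_lt_one hr0 hr1).mul_left (‖a k‖ * r^k)
    have hinj : Function.Injective (fun m : ℕ => m + k) := add_left_injective k
    have hsupp : ∀ n ∉ Set.range (fun m : ℕ => m + k),
        (if n < k then (0:ℝ) else ‖a k‖ * r^n) = 0 := by
      intro n hn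
      have hnk : n < k := by by_contra hcon; exact hn ⟨n - k, by simpa using Nat.sub_add_cancel (Nat.le_of_not_lt hcon)⟩
      simp [if_pos hnk]
    refine (Function.Injective.hasSum_iff hinj hsupp).mp ?_
    have heq : ((fun n => if n < k then (0:ℝ) else ‖a k‖ * r^n) ∘ (fun m : ℕ => m + k))
        = fun m => ‖a k‖ * r^k * r^m := by
      funext m
      simp only [Function.comp_apply, if_neg (by omega : ¬ m + k < k)]
      rw [pow_add]; ring
    rw [heq]; exact h1
  have hBnd : Summable (fun p : ℕ × ℕ => if p.2 < p.1 then (0:ℝ) else ‖a p.1‖ * r^p.2) := by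
    rw [summable_prod_of_nonneg (fun p => by dsimp only; split <;> positivity)]
    constructor
    · exact fun k => (hBndrow k).summable
    · have heq : (fun k => ∑' n, if n < k then (0:ℝ) else ‖a k‖ * r^n)
          = fun k => ‖a k‖ * r^k * (1-r)⁻¹ := by
        funext k; exact (hBndrow k).tsum_eq
      rw [heq]
      exact hAr.mul_right _
  have hFsum : Summable (fun p : ℕ × ℕ => F2 p.1 p.2) := by
    apply Summable.of_nonneg_of_le hF2nn (fun p => ?_) hBnd
    by_cases hnk : p.2 < p.1
    · rw [if_pos hnk, hF2, hW]
      simp [if_pos hnk]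
    · rw [if_neg hnk, hF2]
      calc ‖a p.1‖ * ‖W p.1 p.2‖ * r^p.2 ≤ ‖a p.1‖ * 1 * r^p.2 :=
            mul_le_mul_of_nonneg_right
              (mul_le_mul_of_nonneg_left (hWb _ _) (norm_nonneg _)) (by positivity)
        _ = ‖a p.1‖ * r^p.2 := by ring
  -- column estimates
  have hcoln : ∀ n, (∑' k, F2 k n) = ∑ k ∈ Finset.range (n+1), F2 k n := by
    intro n
    apply tsum_eq_sum
    intro k hk
    have hkn : n < k := by
      simp only [Finset.mem_range] at hk
      omega
    rw [hF2, hW]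
    simp [if_pos hkn]
  have hterm : ∀ n, ‖c n‖ * r^n ≤ ∑' k, F2 k n := by
    intro n
    rw [hcoln n]
    calc ‖c n‖ * r^n ≤ (∑ k ∈ Finset.range (n+1), ‖a k * W k n‖) * r^n := by
          gcongr
          rw [hcn n]
          exact norm_sum_le _ _
      _ = ∑ k ∈ Finset.range (n+1), F2 k n := by
          rw [Finset.sum_mul]
          apply Finset.sum_congr rfl
          intro k _
          rw [hF2, norm_mul]
  have hswap : Summable (fun p : ℕ × ℕ => F2 p.2 p.1) := by
    have := hFsum.prod_symm
    exact this
  have hcolsum : Summable (fun n => ∑' k, F2 k n) :=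
    ((summable_prod_of_nonneg (fun p => hF2nn p.swap)).mp hswap).2
  have hrowsum : Summable (fun k => ∑' n, F2 k n) :=
    ((summable_prod_of_nonneg hF2nn).mp hFsum).2
  have hLHS : Summable (fun n => ‖c n‖ * r^n) :=
    Summable.of_nonneg_of_le (fun n => by positivity) hterm hcolsum
  have hcomm : (∑' n, ∑' k, F2 k n) = ∑' k, ∑' n, F2 k n := Summable.tsum_comm hFsum
  calc (∑' n, ‖c n‖ * r^n) ≤ ∑' n, ∑' k, F2 k n := Summable.tsum_le_tsum hterm hLHS hcolsum
    _ = ∑' k, ∑' n, F2 k n := hcomm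
    _ ≤ ∑' k, ‖a k‖ * r^k := by
        apply Summable.tsum_le_tsum _ hrowsum hAr
        intro k
        have heq : (fun n => F2 k n) = fun n => ‖a k‖ * (‖W k n‖ * r^n) := by
          funext n; rw [hF2]; ring
        rw [heq, tsum_mul_left]
        exact mul_le_mul_of_nonneg_left (hrow_le k) (norm_nonneg _)

end Stmt12

theorem stmt_12 (f g ω : ℂ → ℂ) (a c : ℕ → ℂ)
    (hf : ∀ z ∈ Metric.ball (0:ℂ) 1, HasSum (fun n : ℕ => a n * z ^ n) (f z))
    (hg : ∀ z ∈ Metric.ball (0:ℂ) 1, HasSum (fun n : ℕ => c n * z ^ n) (g z))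
    (hω : DifferentiableOn ℂ ω (Metric.ball 0 1))
    (hω0 : ω 0 = 0)
    (hωmap : Set.MapsTo ω (Metric.ball (0:ℂ) 1) (Metric.ball (0:ℂ) 1))
    (hsub : ∀ z ∈ Metric.ball (0:ℂ) 1, g z = f (ω z)) :
    ∀ r : ℝ, 0 ≤ r → r ≤ 1/3 →
      (∑' n : ℕ, ‖c n‖ * r ^ n) ≤ ∑' n : ℕ, ‖a n‖ * r ^ n := by
  intro r hr0 hr3
  exact
    Stmt12.main f g ω a c hf hg hω hω0 hωmap hsub hr0 hr3
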